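/- Consider one inner loop of SARAH (SARAH-IN) with each f_i L-smooth, and suppose the learning rate satisfies η ≤ 2 / ( L ( sqrt(1 + (4m/b)·((n−b)/(n−1))) + 1 ) ). If the output w̃ equals w_t with t chosen uniformly at random from {0,1,...,m}, then E[||∇P(w̃)||²] ≤ (2/(η(m+1)))·[P(w_0) − P(w_*)], where w_* is a global minimizer of P. -/

import Mathlib

open scoped BigOperators

noncomputable section

/-- Vectors in `ℝ^d`. -/
abbrev Vec (d : ℕ) := EuclideanSpace ℝ (Fin d)

/-- The type of mini-batches of size `b` from `{1,…,n}` (modeled as `Fin n`). -/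
def Batch (n b : ℕ) : Type := {s : Finset (Fin n) // s.card = b}

instance (n b : ℕ) : Fintype (Batch n b) :=
  inferInstanceAs (Fintype {s : Finset (Fin n) // s.card = b})

/-- Expectation (uniform average) over a finite sample space. -/
def expec {Ω : Type*} [Fintype Ω] (F : Ω → ℝ) : ℝ :=
  (Fintype.card Ω : ℝ)⁻¹ * ∑ ω, F ω

/-- The SARAH-IN state `(w_t, v_t)` given a starting point `w0`, a learning rate `η`,
a batch size `b` and a sequence of mini-batches `I` (where `I t` is the batch used to
form `v_t`, for `t ≥ 1`). -/
def sarahState {d n : ℕ} (f : Fin n → Vec d → ℝ) (w0 : Vec d) (η : ℝ) (b : ℕ)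
    (I : ℕ → Finset (Fin n)) : ℕ → Vec d × Vec d
  | 0 => (w0, (n : ℝ)⁻¹ • ∑ i, gradient (f i) w0)
  | t + 1 =>
    let p := sarahState f w0 η b I t
    let w' := p.1 - η • p.2
    (w', (b : ℝ)⁻¹ • ∑ i ∈ I (t + 1), (gradient (f i) w' - gradient (f i) p.1) + p.2)

/-- Extend a finite sequence of mini-batches to all of `ℕ` (indices `≥ T` are irrelevant). -/
def pad {n b T : ℕ} (ω : Fin T → Batch n b) : ℕ → Finset (Fin n) :=
  fun t => if h : t < T then (ω ⟨t, h⟩).1 else ∅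


open Finset intervalIntegral
open scoped RealInnerProductSpace

section AuxGeneral

variable {E : Type*} [NormedAddCommGroup E] [InnerProductSpace ℝ E]

section Descent
variable [CompleteSpace E]

/-- Descent lemma for a function with Lipschitz gradient. -/
theorem descent_lemma {P : E → ℝ} {g : E → E} {L : ℝ} (hL : 0 ≤ L)
    (hg : ∀ x, HasGradientAt P (g x) x)
    (hlip : ∀ x y, ‖g x - g y‖ ≤ L * ‖x - y‖) (x y : E) :
    P y ≤ P x + ⟪g x, y - x⟫ + L / 2 * ‖y - x‖ ^ 2 := by
  have hgc : Continuous g := by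
    rw [Metric.continuous_iff]
    intro u ε hε
    by_cases hL0 : L = 0
    · exact ⟨1, one_pos, fun a _ => by
        have := hlip a u
        rw [hL0, zero_mul] at this
        simpa [dist_eq_norm] using lt_of_le_of_lt this hε⟩
    · refine ⟨ε / L, by positivity, fun a ha => ?_⟩
      have := hlip a u
      rw [dist_eq_norm] at ha ⊢
      calc ‖g a - g u‖ ≤ L * ‖a - u‖ := this
        _ < L * (ε / L) := by
            apply mul_lt_mul_of_pos_left ha (lt_of_le_of_ne hL (Ne.symm hL0))
        _ = ε := by field_simp
  set φ' : ℝ → ℝ := fun s => ⟪g (x + s • (y - x)), y - x⟫ with hφ'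
  have hline : ∀ s : ℝ, HasDerivAt (fun s : ℝ => x + s • (y - x)) (y - x) s := by
    intro s
    simpa using ((hasDerivAt_id s).smul_const (y - x)).const_add x
  have hD : ∀ s : ℝ, HasDerivAt (fun s : ℝ => P (x + s • (y - x))) (φ' s) s := by
    intro s
    have h1 : HasFDerivAt P ((InnerProductSpace.toDual ℝ E) (g (x + s • (y - x))))
        (x + s • (y - x)) := (hg _).hasFDerivAt
    have := h1.comp_hasDerivAt s (hline s)
    simpa [φ', InnerProductSpace.toDual_apply_apply, Function.comp_def] using this
  have hφc : Continuous φ' := by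
    apply Continuous.inner
    · exact hgc.comp (by continuity)
    · exact continuous_const
  have hint : ∫ s in (0:ℝ)..1, φ' s = P (x + (1:ℝ) • (y - x)) - P (x + (0:ℝ) • (y - x)) :=
    integral_eq_sub_of_hasDerivAt (fun s _ => hD s) (hφc.intervalIntegrable 0 1)
  have hbound : ∀ s ∈ Set.Icc (0:ℝ) 1, φ' s ≤ ⟪g x, y - x⟫ + L * s * ‖y - x‖ ^ 2 := by
    intro s hs
    have h1 : φ' s - ⟪g x, y - x⟫ = ⟪g (x + s • (y - x)) - g x, y - x⟫ := by
      rw [inner_sub_left]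
    have h2 : ⟪g (x + s • (y - x)) - g x, y - x⟫ ≤ L * s * ‖y - x‖ ^ 2 := by
      calc ⟪g (x + s • (y - x)) - g x, y - x⟫ ≤ ‖g (x + s • (y - x)) - g x‖ * ‖y - x‖ :=
            real_inner_le_norm _ _
        _ ≤ (L * ‖(x + s • (y - x)) - x‖) * ‖y - x‖ := by
            apply mul_le_mul_of_nonneg_right (hlip _ _) (norm_nonneg _)
        _ = L * s * ‖y - x‖ ^ 2 := by
            rw [add_sub_cancel_left, norm_smul, Real.norm_eq_abs, abs_of_nonneg hs.1]
            ring
    linarith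
  have hmono : ∫ s in (0:ℝ)..1, φ' s ≤ ∫ s in (0:ℝ)..1, (⟪g x, y - x⟫ + L * s * ‖y - x‖ ^ 2) := by
    apply integral_mono_on zero_le_one (hφc.intervalIntegrable 0 1)
    · exact (Continuous.intervalIntegrable (by continuity) 0 1)
    · exact hbound
  have hval : ∫ s in (0:ℝ)..1, (⟪g x, y - x⟫ + L * s * ‖y - x‖ ^ 2)
      = ⟪g x, y - x⟫ + L / 2 * ‖y - x‖ ^ 2 := by
    rw [intervalIntegral.integral_add (intervalIntegrable_const)
      (Continuous.intervalIntegrable (by continuity) 0 1)]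
    simp only [intervalIntegral.integral_const]
    have : ∫ s in (0:ℝ)..1, L * s * ‖y - x‖ ^ 2
        = (L * ‖y - x‖ ^ 2) * ∫ s in (0:ℝ)..1, s := by
      rw [← intervalIntegral.integral_const_mul]
      congr 1; ext s; ring
    rw [this, integral_id]
    norm_num
    ring
  have := hint ▸ hmono
  rw [hval] at this
  simp only [one_smul, zero_smul, add_zero] at this
  have : P (x + (y - x)) ≤ P x + (⟪g x, y - x⟫ + L / 2 * ‖y - x‖ ^ 2) := by linarith
  rw [add_sub_cancel] at this; linarith

end Descent

-- counting subsets containing a fixed element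
lemma card_filter_mem_powersetCard {α : Type*} [DecidableEq α] (u : Finset α) {i : α}
    (hi : i ∈ u) (k : ℕ) :
    ((u.powersetCard (k+1)).filter (fun s => i ∈ s)).card = (u.card - 1).choose k := by
  have : ((u.powersetCard (k+1)).filter (fun s => i ∈ s)).card
      = ((u.erase i).powersetCard k).card := by
    apply Finset.card_bij' (fun s _ => s.erase i) (fun t _ => insert i t)
    · intro s hs
      simp only [mem_filter] at hs
      exact Finset.insert_erase hs.2
    · intro t ht
      simp only [mem_powersetCard] at ht
      have hit : i ∉ t := fun h => (Finset.mem_erase.mp (ht.1 h)).1 rfl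
      exact Finset.erase_insert hit

    · intro s hs
      simp only [mem_filter, mem_powersetCard] at hs
      simp only [mem_powersetCard]
      exact ⟨Finset.erase_subset_erase i hs.1.1, by simp [Finset.card_erase_of_mem hs.2, hs.1.2]⟩
    · intro t ht
      simp only [mem_powersetCard] at ht
      have hit : i ∉ t := fun h => (Finset.mem_erase.mp (ht.1 h)).1 rfl
      simp only [mem_filter, mem_powersetCard]
      refine ⟨⟨?_, by rw [Finset.card_insert_of_notMem hit, ht.2]⟩, Finset.mem_insert_self i t⟩
      intro a ha
      rcases Finset.mem_insert.mp ha with rfl | h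
      · exact hi
      · exact Finset.mem_of_mem_erase (ht.1 h)
  rw [this, Finset.card_powersetCard, Finset.card_erase_of_mem hi]

-- counting subsets containing two fixed distinct elements
lemma card_filter_pair_powersetCard {α : Type*} [DecidableEq α] (u : Finset α) {i j : α}
    (hi : i ∈ u) (hj : j ∈ u) (hij : i ≠ j) (k : ℕ) :
    ((u.powersetCard (k+2)).filter (fun s => i ∈ s ∧ j ∈ s)).card = (u.card - 2).choose k := by
  have h1 : ((u.powersetCard (k+2)).filter (fun s => i ∈ s ∧ j ∈ s)).card
      = (((u.erase i).powersetCard (k+1)).filter (fun s => j ∈ s)).card := by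
    apply Finset.card_bij' (fun s _ => s.erase i) (fun t _ => insert i t)
    · intro s hs
      simp only [mem_filter] at hs
      exact Finset.insert_erase hs.2.1
    · intro t ht
      simp only [mem_filter, mem_powersetCard] at ht
      have hit : i ∉ t := fun h => (Finset.mem_erase.mp (ht.1.1 h)).1 rfl
      exact Finset.erase_insert hit

    · intro s hs
      simp only [mem_filter, mem_powersetCard] at hs ⊢
      exact ⟨⟨Finset.erase_subset_erase i hs.1.1,
        by simp [Finset.card_erase_of_mem hs.2.1, hs.1.2]⟩,
        Finset.mem_erase.mpr ⟨fun h => hij h.symm, hs.2.2⟩⟩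
    · intro t ht
      simp only [mem_filter, mem_powersetCard] at ht ⊢
      have hit : i ∉ t := fun h => (Finset.mem_erase.mp (ht.1.1 h)).1 rfl
      refine ⟨⟨?_, by rw [Finset.card_insert_of_notMem hit, ht.1.2]⟩,
        Finset.mem_insert_self i t, Finset.mem_insert_of_mem ht.2⟩
      intro a ha
      rcases Finset.mem_insert.mp ha with rfl | h
      · exact hi
      · exact Finset.mem_of_mem_erase (ht.1.1 h)
  rw [h1, card_filter_mem_powersetCard (u.erase i) (Finset.mem_erase.mpr ⟨hij.symm, hj⟩) k,
    Finset.card_erase_of_mem hi]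
  congr 1

lemma sum_swap_mem {n : ℕ} {M : Type*} [AddCommMonoid M] (A : Finset (Finset (Fin n)))
    (g : Fin n → M) :
    ∑ s ∈ A, ∑ i ∈ s, g i = ∑ i : Fin n, (A.filter (fun s => i ∈ s)).card • g i := by
  have h : ∀ s ∈ A, ∑ i ∈ s, g i = ∑ i : Fin n, if i ∈ s then g i else 0 := by
    intro s _
    rw [Finset.sum_ite_mem, Finset.univ_inter]
  rw [Finset.sum_congr rfl h, Finset.sum_comm]
  refine Finset.sum_congr rfl fun i _ => ?_
  rw [← Finset.sum_filter, Finset.sum_const]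

/-- Mean of the subset sums over all `b`-subsets. -/
lemma sum_powersetCard_sum {n b : ℕ} {M : Type*} [AddCommMonoid M] (hb : 1 ≤ b)
    (g : Fin n → M) :
    ∑ s ∈ (univ : Finset (Fin n)).powersetCard b, ∑ i ∈ s, g i
      = ((n-1).choose (b-1)) • ∑ i, g i := by
  rw [sum_swap_mem]
  obtain ⟨k, rfl⟩ : ∃ k, b = k + 1 := ⟨b - 1, by omega⟩
  have h : ∀ i ∈ (univ : Finset (Fin n)),
      (((univ : Finset (Fin n)).powersetCard (k+1)).filter (fun s => i ∈ s)).card • g i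
      = ((n-1).choose k) • g i := by
    intro i _
    rw [card_filter_mem_powersetCard univ (Finset.mem_univ i) k, Finset.card_univ,
      Fintype.card_fin]
  rw [Finset.sum_congr rfl h, ← Finset.smul_sum]
  norm_num


/-- Variance of the subset sums over all `b`-subsets, for vectors summing to zero. -/
lemma sum_powersetCard_normSq {n b : ℕ} (hn : 2 ≤ n) (hb : 1 ≤ b) (hbn : b ≤ n)
    (y : Fin n → E) (hy : ∑ i, y i = 0) :
    (∑ s ∈ (univ : Finset (Fin n)).powersetCard b, ‖∑ i ∈ s, y i‖^2) * ((n:ℝ) * ((n:ℝ)-1))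
      = (n.choose b : ℝ) * b * ((n:ℝ) - b) * ∑ i, ‖y i‖^2 := by
  set A := (univ : Finset (Fin n)).powersetCard b with hA
  set c1 : ℝ := ((n-1).choose (b-1) : ℝ) with hc1
  set c2 : ℝ := if 2 ≤ b then (((n-2).choose (b-2) : ℕ) : ℝ) else 0 with hc2
  -- counts
  have hcount : ∀ i j : Fin n, ((A.filter (fun s => i ∈ s ∧ j ∈ s)).card : ℝ)
      = if i = j then c1 else c2 := by
    intro i j
    by_cases hij : i = j
    · subst hij
      rw [if_pos rfl]
      simp only [and_self]
      obtain ⟨k, hk⟩ : ∃ k, b = k + 1 := ⟨b - 1, by omega⟩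
      subst hk
      rw [hA, card_filter_mem_powersetCard univ (Finset.mem_univ i) k, Finset.card_univ,
        Fintype.card_fin, hc1]
      norm_num
    · rw [if_neg hij, hc2]
      by_cases hb2 : 2 ≤ b
      · rw [if_pos hb2]
        obtain ⟨k, hk⟩ : ∃ k, b = k + 2 := ⟨b - 2, by omega⟩
        subst hk
        rw [hA, card_filter_pair_powersetCard univ (Finset.mem_univ i) (Finset.mem_univ j)
          hij k, Finset.card_univ, Fintype.card_fin]
        norm_num
      · rw [if_neg hb2]
        have hb1 : b = 1 := by omega
        norm_num
        intro s hs
        rw [hA, Finset.mem_powersetCard] at hs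
        intro hmem1 hmem2
        have h2 : ({i, j} : Finset (Fin n)) ⊆ s := by
          intro a ha
          rcases Finset.mem_insert.mp ha with rfl | ha
          · exact hmem1
          · exact (Finset.mem_singleton.mp ha) ▸ hmem2
        have := Finset.card_le_card h2
        rw [Finset.card_insert_of_notMem (by simpa using hij), Finset.card_singleton] at this
        omega
  -- expand the norm squared as double sums
  have hexp : ∀ s : Finset (Fin n), ‖∑ i ∈ s, y i‖^2 = ∑ i ∈ s, ∑ j ∈ s, ⟪y i, y j⟫ := by
    intro s
    rw [← real_inner_self_eq_norm_sq, sum_inner]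
    exact Finset.sum_congr rfl fun i _ => inner_sum _ _ _
  have hswap : ∑ s ∈ A, ‖∑ i ∈ s, y i‖^2
      = ∑ i : Fin n, ∑ j : Fin n, ((A.filter (fun s => i ∈ s ∧ j ∈ s)).card : ℝ) * ⟪y i, y j⟫ := by
    have h1 : ∀ s ∈ A, ‖∑ i ∈ s, y i‖^2
        = ∑ i : Fin n, ∑ j : Fin n, if i ∈ s ∧ j ∈ s then ⟪y i, y j⟫ else 0 := by
      intro s _
      rw [hexp]
      rw [show (∑ i ∈ s, ∑ j ∈ s, ⟪y i, y j⟫)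
          = ∑ i : Fin n, if i ∈ s then (∑ j ∈ s, ⟪y i, y j⟫) else 0 by
        rw [Finset.sum_ite_mem, Finset.univ_inter]]
      refine Finset.sum_congr rfl fun i _ => ?_
      by_cases his : i ∈ s
      · simp only [his, true_and, if_true]
        rw [Finset.sum_ite_mem, Finset.univ_inter]
      · simp [his]
    rw [Finset.sum_congr rfl h1, Finset.sum_comm]
    refine Finset.sum_congr rfl fun i _ => ?_
    rw [Finset.sum_comm]
    refine Finset.sum_congr rfl fun j _ => ?_
    rw [← Finset.sum_filter, Finset.sum_const, nsmul_eq_mul]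
  -- the double inner product sum vanishes
  have hzero : ∑ i : Fin n, ∑ j : Fin n, ⟪y i, y j⟫ = 0 := by
    have : ∑ i : Fin n, ∑ j : Fin n, ⟪y i, y j⟫ = ⟪∑ i, y i, ∑ j, y j⟫ := by
      rw [sum_inner]
      exact Finset.sum_congr rfl fun i _ => (inner_sum _ _ _).symm
    rw [this, hy, inner_zero_left]
  -- combine
  have hmain : ∑ s ∈ A, ‖∑ i ∈ s, y i‖^2 = (c1 - c2) * ∑ i, ‖y i‖ ^ 2 := by
    rw [hswap]
    have h2 : ∀ i ∈ (univ : Finset (Fin n)),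
        (∑ j : Fin n, ((A.filter (fun s => i ∈ s ∧ j ∈ s)).card : ℝ) * ⟪y i, y j⟫)
        = c2 * (∑ j : Fin n, ⟪y i, y j⟫) + (c1 - c2) * ‖y i‖ ^ 2 := by
      intro i _
      have h3 : ∀ j ∈ (univ : Finset (Fin n)),
          ((A.filter (fun s => i ∈ s ∧ j ∈ s)).card : ℝ) * ⟪y i, y j⟫
          = c2 * ⟪y i, y j⟫ + (if i = j then (c1 - c2) * ‖y i‖ ^ 2 else 0) := by
        intro j _
        rw [hcount]
        by_cases hij : i = j
        · subst hij
          rw [if_pos rfl, if_pos rfl, real_inner_self_eq_norm_sq]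
          ring
        · rw [if_neg hij, if_neg hij]
          ring
      rw [Finset.sum_congr rfl h3, Finset.sum_add_distrib, ← Finset.mul_sum,
        Finset.sum_ite_eq, if_pos (Finset.mem_univ i)]
    rw [Finset.sum_congr rfl h2, Finset.sum_add_distrib, ← Finset.mul_sum, hzero, mul_zero,
      zero_add, ← Finset.mul_sum]
  rw [hmain]
  -- evaluate the constants
  have e1 : c1 * n = (n.choose b : ℝ) * b := by
    obtain ⟨n', hn'⟩ : ∃ k, n = k + 1 := ⟨n - 1, by omega⟩
    obtain ⟨b', hb'⟩ : ∃ k, b = k + 1 := ⟨b - 1, by omega⟩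
    subst hn' hb'
    have h := Nat.add_one_mul_choose_eq n' b'
    rw [hc1]
    have h' := congrArg (Nat.cast (R := ℝ)) h
    push_cast at h'
    push_cast [Nat.add_sub_cancel]
    linarith
  have e2 : c2 * ((n:ℝ) * ((n:ℝ)-1)) = (n.choose b : ℝ) * b * ((b:ℝ)-1) := by
    by_cases hb2 : 2 ≤ b
    · obtain ⟨n', hn'⟩ : ∃ k, n = k + 2 := ⟨n - 2, by omega⟩
      obtain ⟨b', hb'⟩ : ∃ k, b = k + 2 := ⟨b - 2, by omega⟩
      subst hn' hb'
      rw [hc2, if_pos hb2]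
      have h2 := Nat.add_one_mul_choose_eq (n'+1) (b'+1)
      have h3 := Nat.add_one_mul_choose_eq n' b'
      have h2' := congrArg (Nat.cast (R := ℝ)) h2
      have h3' := congrArg (Nat.cast (R := ℝ)) h3
      push_cast at h2' h3'
      push_cast [Nat.add_sub_cancel]
      linear_combination ((b':ℝ)+1) * h2' + ((n':ℝ)+2) * h3'
    · have hb1 : b = 1 := by omega
      subst hb1
      rw [hc2, if_neg hb2]
      push_cast
      ring
  linear_combination (((n:ℝ)-1) * (∑ i, ‖y i‖ ^ 2)) * e1 - (∑ i, ‖y i‖ ^ 2) * e2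

/-- Averaging over resampling one coordinate. -/
lemma sum_update_eq {T : ℕ} {B : Type*} [Fintype B] [DecidableEq B] (k : Fin T)
    (F : (Fin T → B) → ℝ) :
    ∑ ω : Fin T → B, ∑ s : B, F (Function.update ω k s)
      = (Fintype.card B : ℝ) * ∑ ω : Fin T → B, F ω := by
  classical
  set e := Equiv.piSplitAt k (fun _ : Fin T => B) with he
  have h1 : ∀ (G : (Fin T → B) → ℝ),
      ∑ ω, G ω = ∑ q : B × ({j : Fin T // j ≠ k} → B), G (e.symm q) :=
    fun G => (Equiv.sum_comp e.symm G).symm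
  rw [h1 (fun ω => ∑ s, F (Function.update ω k s)), h1 F]
  rw [Fintype.sum_prod_type, Fintype.sum_prod_type]
  have hupd : ∀ (x : B) (r : {j : Fin T // j ≠ k} → B) (s : B),
      Function.update (e.symm (x, r)) k s = e.symm (s, r) := by
    intro x r s
    funext j
    by_cases hj : j = k
    · subst hj
      simp [Function.update, he, Equiv.piSplitAt]
    · simp [Function.update, hj, he, Equiv.piSplitAt]
  simp_rw [hupd]
  rw [Finset.sum_const, card_univ, nsmul_eq_mul]
  congr 1
  rw [Finset.sum_comm]

end AuxGeneral

lemma sarahState_congr {d n : ℕ} (f : Fin n → Vec d → ℝ) (w0 : Vec d) (η : ℝ) (b : ℕ)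
    (I I' : ℕ → Finset (Fin n)) :
    ∀ t : ℕ, (∀ s, s ≤ t → I s = I' s) →
      sarahState f w0 η b I t = sarahState f w0 η b I' t := by
  intro t
  induction t with
  | zero => intro _; rfl
  | succ t ih =>
    intro h
    have h1 := ih (fun s hs => h s (Nat.le_succ_of_le hs))
    simp only [sarahState, h1, h (t+1) le_rfl]

lemma pad_update_le {n b T : ℕ} (ω : Fin T → Batch n b) (k : Fin T) (s : Batch n b)
    (j : ℕ) (hj : j < (k : ℕ)) : pad (Function.update ω k s) j = pad ω j := by
  unfold pad
  by_cases h : j < T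
  · rw [dif_pos h, dif_pos h, Function.update_of_ne]
    intro hc
    rw [Fin.ext_iff] at hc
    simp at hc
    omega
  · rw [dif_neg h, dif_neg h]

lemma pad_update_self {n b T : ℕ} (ω : Fin T → Batch n b) (k : Fin T) (s : Batch n b) :
    pad (Function.update ω k s) (k : ℕ) = s.1 := by
  unfold pad
  rw [dif_pos k.isLt]
  have : (⟨(k : ℕ), k.isLt⟩ : Fin T) = k := by ext; rfl
  rw [this, Function.update_self]

lemma sum_range_sum_range_le {u : ℕ → ℝ} (hu : ∀ j, 0 ≤ u j) :
    ∀ M : ℕ, ∑ t ∈ Finset.range (M+1), ∑ j ∈ Finset.range t, u j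
      ≤ M * ∑ j ∈ Finset.range (M+1), u j := by
  intro M
  induction M with
  | zero => simp
  | succ M ih =>
    rw [Finset.sum_range_succ]
    have h1 : ∑ j ∈ Finset.range (M+1), u j ≤ ∑ j ∈ Finset.range (M+2), u j :=
      Finset.sum_le_sum_of_subset_of_nonneg (Finset.range_subset_range.mpr (by omega))
        (fun j _ _ => hu j)
    have h2 : (0:ℝ) ≤ ∑ j ∈ Finset.range (M+2), u j :=
      Finset.sum_nonneg fun j _ => hu j
    push_cast
    nlinarith [ih]


/-- The iterate `w_t`. -/
def sW {d n : ℕ} (f : Fin n → Vec d → ℝ) (w0 : Vec d) (η : ℝ) (b : ℕ)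
    (I : ℕ → Finset (Fin n)) (t : ℕ) : Vec d := (sarahState f w0 η b I t).1

/-- The SARAH direction `v_t`. -/
def sV {d n : ℕ} (f : Fin n → Vec d → ℝ) (w0 : Vec d) (η : ℝ) (b : ℕ)
    (I : ℕ → Finset (Fin n)) (t : ℕ) : Vec d := (sarahState f w0 η b I t).2

lemma sW_zero {d n : ℕ} (f : Fin n → Vec d → ℝ) (w0 : Vec d) (η : ℝ) (b : ℕ)
    (I : ℕ → Finset (Fin n)) : sW f w0 η b I 0 = w0 := rfl

lemma sV_zero {d n : ℕ} (f : Fin n → Vec d → ℝ) (w0 : Vec d) (η : ℝ) (b : ℕ)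
    (I : ℕ → Finset (Fin n)) : sV f w0 η b I 0 = (n : ℝ)⁻¹ • ∑ i, gradient (f i) w0 := rfl

lemma sW_succ {d n : ℕ} (f : Fin n → Vec d → ℝ) (w0 : Vec d) (η : ℝ) (b : ℕ)
    (I : ℕ → Finset (Fin n)) (t : ℕ) :
    sW f w0 η b I (t+1) = sW f w0 η b I t - η • sV f w0 η b I t := rfl

lemma sV_succ {d n : ℕ} (f : Fin n → Vec d → ℝ) (w0 : Vec d) (η : ℝ) (b : ℕ)
    (I : ℕ → Finset (Fin n)) (t : ℕ) :
    sV f w0 η b I (t+1) = (b : ℝ)⁻¹ • ∑ i ∈ I (t + 1),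
      (gradient (f i) (sW f w0 η b I (t+1)) - gradient (f i) (sW f w0 η b I t))
      + sV f w0 η b I t := rfl

lemma sum_batch_eq {n b : ℕ} {M : Type*} [AddCommMonoid M] (F : Finset (Fin n) → M) :
    (∑ s : Batch n b, F s.1) = ∑ s ∈ (univ : Finset (Fin n)).powersetCard b, F s :=
  (Finset.sum_subtype ((univ : Finset (Fin n)).powersetCard b)
    (fun s => Finset.mem_powersetCard_univ) F).symm

set_option maxHeartbeats 8000000 in
/-- **Theorem 1 of SARAH (nonconvex).** One inner loop of SARAH with small enough
learning rate and output `w̃ = w_t` for `t` uniform in `{0,…,m}` satisfies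
`E‖∇P(w̃)‖² ≤ 2/(η(m+1))·(P(w₀) − P(w⋆))`. -/
theorem sarah_in_convergence
    {d n : ℕ} (hn : 2 ≤ n)
    (f : Fin n → Vec d → ℝ) (L : ℝ) (hL : 0 < L)
    (hdiff : ∀ i, Differentiable ℝ (f i))
    (hsmooth : ∀ i (w w' : Vec d),
      ‖gradient (f i) w - gradient (f i) w'‖ ≤ L * ‖w - w'‖)
    (P : Vec d → ℝ) (hP : P = fun w => (n : ℝ)⁻¹ * ∑ i, f i w)
    (wstar : Vec d) (hmin : ∀ w, P wstar ≤ P w)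
    (w0 : Vec d) (η : ℝ) (hη : 0 < η) (b m : ℕ) (hb : 1 ≤ b) (hbn : b ≤ n)
    (hη2 : η ≤ 2 / (L * (Real.sqrt (1 + 4 * (m : ℝ) / (b : ℝ)
      * (((n : ℝ) - (b : ℝ)) / ((n : ℝ) - 1))) + 1))) :
    expec (fun p : (Fin (m + 1) → Batch n b) × Fin (m + 1) =>
        ‖gradient P ((sarahState f w0 η b (pad p.1) (p.2 : ℕ)).1)‖ ^ 2)
      ≤ 2 / (η * ((m : ℝ) + 1)) * (P w0 - P wstar) := by
  classical
  have hn2 : (2:ℝ) ≤ (n:ℝ) := by exact_mod_cast hn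
  have hnpos : (0:ℝ) < (n:ℝ) := by linarith
  have hbpos : (0:ℝ) < (b:ℝ) := by exact_mod_cast hb
  have hbn' : (b:ℝ) ≤ (n:ℝ) := by exact_mod_cast hbn
  -- the gradient of P
  set gP : Vec d → Vec d := fun w => (n:ℝ)⁻¹ • ∑ i, gradient (f i) w with hgPdef
  have hgP : ∀ w, HasGradientAt P (gP w) w := by
    intro w
    rw [hasGradientAt_iff_hasFDerivAt]
    have h1 : HasFDerivAt (fun w => ∑ i, f i w)
        (∑ i, (InnerProductSpace.toDual ℝ (Vec d)) (gradient (f i) w)) w := by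
      apply HasFDerivAt.fun_sum
      intro i _
      exact hasGradientAt_iff_hasFDerivAt.mp ((hdiff i).differentiableAt.hasGradientAt)
    have h2 := h1.const_mul ((n:ℝ)⁻¹)
    rw [hP]
    have h3 : (InnerProductSpace.toDual ℝ (Vec d)) (gP w)
        = (n:ℝ)⁻¹ • ∑ i, (InnerProductSpace.toDual ℝ (Vec d)) (gradient (f i) w) := by
      rw [hgPdef]
      simp only [map_smul, map_sum]
    rw [h3]
    exact h2
  have hgPeq : ∀ w, gradient P w = gP w := fun w => (hgP w).gradient
  have hLip : ∀ x y : Vec d, ‖gP x - gP y‖ ≤ L * ‖x - y‖ := by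
    intro x y
    have h1 : gP x - gP y = (n:ℝ)⁻¹ • ∑ i, (gradient (f i) x - gradient (f i) y) := by
      rw [hgPdef]
      simp only
      rw [Finset.sum_sub_distrib, smul_sub]
    rw [h1, norm_smul, Real.norm_eq_abs, abs_of_nonneg (by positivity)]
    calc (n:ℝ)⁻¹ * ‖∑ i, (gradient (f i) x - gradient (f i) y)‖
        ≤ (n:ℝ)⁻¹ * ∑ i, ‖gradient (f i) x - gradient (f i) y‖ := by
          apply mul_le_mul_of_nonneg_left (norm_sum_le _ _) (by positivity)
      _ ≤ (n:ℝ)⁻¹ * ∑ _i : Fin n, L * ‖x - y‖ := by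
          apply mul_le_mul_of_nonneg_left
            (Finset.sum_le_sum (fun i _ => hsmooth i x y)) (by positivity)
      _ = L * ‖x - y‖ := by
          rw [Finset.sum_const, Finset.card_univ, Fintype.card_fin, nsmul_eq_mul]
          field_simp
  -- per-step descent inequality
  have step : ∀ (x v : Vec d), P (x - η • v) ≤ P x - η/2 * ‖gP x‖^2
      - (η/2*(1 - L*η)) * ‖v‖^2 + η/2 * ‖gP x - v‖^2 := by
    intro x v
    have h := descent_lemma hL.le hgP hLip x (x - η • v)
    have h2 : (x - η • v) - x = -(η • v) := by abel
    rw [h2] at h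
    have h3 : ⟪gP x, -(η • v)⟫ = -(η * ⟪gP x, v⟫) := by
      rw [inner_neg_right, real_inner_smul_right]
    have h4 : ‖-(η • v)‖^2 = η^2 * ‖v‖^2 := by
      rw [norm_neg, norm_smul, Real.norm_eq_abs, mul_pow, sq_abs]
    have h5 : ‖gP x - v‖^2 = ‖gP x‖^2 - 2*⟪gP x, v⟫ + ‖v‖^2 := norm_sub_sq_real _ _
    rw [h3, h4] at h
    nlinarith [h, h5]
  -- nonemptiness and cardinalities
  have hBne : Nonempty (Batch n b) := by
    obtain ⟨t, _, ht⟩ := Finset.exists_subset_card_eq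
      (show b ≤ (univ : Finset (Fin n)).card by simpa using hbn)
    exact ⟨⟨t, ht⟩⟩
  have hcardB : (Fintype.card (Batch n b) : ℝ) = (n.choose b : ℝ) := by
    have : Fintype.card (Batch n b) = n.choose b := by
      rw [show Fintype.card (Batch n b)
          = Fintype.card {s : Finset (Fin n) // s.card = b} from rfl,
        Fintype.card_subtype]
      rw [show (filter (fun s : Finset (Fin n) => s.card = b) univ)
          = (univ : Finset (Fin n)).powersetCard b by
        rw [Finset.powersetCard_eq_filter, Finset.powerset_univ]]
      rw [Finset.card_powersetCard, Finset.card_univ, Fintype.card_fin]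
    rw [this]
  have hcardBpos : 0 < (Fintype.card (Batch n b) : ℝ) := by
    have := Fintype.card_pos (α := Batch n b)
    exact_mod_cast this
  set NΩ : ℝ := (Fintype.card (Fin (m+1) → Batch n b) : ℝ) with hNΩ
  have hNΩpos : 0 < NΩ := by
    rw [hNΩ]
    exact_mod_cast Fintype.card_pos (α := Fin (m+1) → Batch n b)
  -- the three expectation sequences (unnormalized)
  set Gq : ℕ → ℝ := fun t => ∑ ω : Fin (m+1) → Batch n b,
    ‖gP (sW f w0 η b (pad ω) t)‖^2 with hGq
  set Bq : ℕ → ℝ := fun t => ∑ ω : Fin (m+1) → Batch n b,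
    ‖sV f w0 η b (pad ω) t‖^2 with hBq
  set Aq : ℕ → ℝ := fun t => ∑ ω : Fin (m+1) → Batch n b,
    ‖gP (sW f w0 η b (pad ω) t) - sV f w0 η b (pad ω) t‖^2 with hAq
  have hBq0 : ∀ j, 0 ≤ Bq j := fun j => Finset.sum_nonneg (fun ω _ => by positivity)
  -- pathwise telescoped descent
  have hpath : ∀ ω : Fin (m+1) → Batch n b,
      ∑ t ∈ Finset.range (m+1), (‖gP (sW f w0 η b (pad ω) t)‖^2
        + (1 - L*η) * ‖sV f w0 η b (pad ω) t‖^2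
        - ‖gP (sW f w0 η b (pad ω) t) - sV f w0 η b (pad ω) t‖^2)
      ≤ 2/η * (P w0 - P wstar) := by
    intro ω
    have htel : ∀ T : ℕ, P (sW f w0 η b (pad ω) T)
        + (η/2) * ∑ t ∈ Finset.range T, (‖gP (sW f w0 η b (pad ω) t)‖^2
          + (1 - L*η) * ‖sV f w0 η b (pad ω) t‖^2
          - ‖gP (sW f w0 η b (pad ω) t) - sV f w0 η b (pad ω) t‖^2) ≤ P w0 := by
      intro T
      induction T with
      | zero => rw [sW_zero]; simp
      | succ T ih =>
        rw [Finset.sum_range_succ, sW_succ]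
        have h := step (sW f w0 η b (pad ω) T) (sV f w0 η b (pad ω) T)
        nlinarith [h, ih]
    have h1 := htel (m+1)
    have h2 := hmin (sW f w0 η b (pad ω) (m+1))
    rw [div_mul_eq_mul_div, le_div_iff₀ hη]
    nlinarith [h1, h2]
  -- aggregated descent
  have hsum1 : ∑ t ∈ Finset.range (m+1), (Gq t + (1 - L*η) * Bq t - Aq t)
      ≤ NΩ * (2/η * (P w0 - P wstar)) := by
    have hptt : ∀ t, Gq t + (1 - L*η) * Bq t - Aq t
        = ∑ ω : Fin (m+1) → Batch n b, (‖gP (sW f w0 η b (pad ω) t)‖^2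
          + (1 - L*η) * ‖sV f w0 η b (pad ω) t‖^2
          - ‖gP (sW f w0 η b (pad ω) t) - sV f w0 η b (pad ω) t‖^2) := by
      intro t
      simp only [hGq, hBq, hAq]
      rw [Finset.mul_sum, ← Finset.sum_add_distrib, ← Finset.sum_sub_distrib]
    rw [Finset.sum_congr rfl (fun t _ => hptt t), Finset.sum_comm]
    refine le_trans (Finset.sum_le_sum (fun ω (_ : ω ∈ univ) => hpath ω)) ?_
    rw [Finset.sum_const, Finset.card_univ, nsmul_eq_mul, hNΩ]
  have hAq0 : Aq 0 = 0 := by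
    simp only [hAq]
    apply Finset.sum_eq_zero
    intro ω _
    have h1 : sV f w0 η b (pad ω) 0 = gP (sW f w0 η b (pad ω) 0) := by
      rw [sV_zero, sW_zero, hgPdef]
    rw [h1, sub_self, norm_zero]
    norm_num
  -- the variance constant
  set C : ℝ := L^2 * η^2 * (((n:ℝ) - (b:ℝ)) / ((b:ℝ) * ((n:ℝ) - 1))) with hCdef
  have hC0 : 0 ≤ C := by
    apply mul_nonneg (by positivity)
    apply div_nonneg (by linarith)
    apply mul_nonneg hbpos.le (by linarith)
  -- the variance recursion
  have hrec : ∀ t, t + 1 ≤ m → Aq (t+1) ≤ Aq t + C * Bq t := by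
    intro t ht
    set k : Fin (m+1) := ⟨t+1, by omega⟩ with hk
    have hb1 : (b:ℝ) ≠ 0 := ne_of_gt hbpos
    have hpt : ∀ ω : Fin (m+1) → Batch n b,
        ∑ s : Batch n b, ‖gP (sW f w0 η b (pad (Function.update ω k s)) (t+1))
            - sV f w0 η b (pad (Function.update ω k s)) (t+1)‖^2
        ≤ (Fintype.card (Batch n b) : ℝ) *
            (‖gP (sW f w0 η b (pad ω) t) - sV f w0 η b (pad ω) t‖^2
             + C * ‖sV f w0 η b (pad ω) t‖^2) := by
      intro ω
      have hst : ∀ s : Batch n b, sarahState f w0 η b (pad (Function.update ω k s)) t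
          = sarahState f w0 η b (pad ω) t := by
        intro s
        apply sarahState_congr
        intro j hj
        exact pad_update_le ω k s j (show j < t+1 by omega)
      have hWt : ∀ s : Batch n b, sW f w0 η b (pad (Function.update ω k s)) t
          = sW f w0 η b (pad ω) t := fun s => congrArg Prod.fst (hst s)
      have hVt : ∀ s : Batch n b, sV f w0 η b (pad (Function.update ω k s)) t
          = sV f w0 η b (pad ω) t := fun s => congrArg Prod.snd (hst s)
      have hW1 : ∀ s : Batch n b, sW f w0 η b (pad (Function.update ω k s)) (t+1)
          = sW f w0 η b (pad ω) (t+1) := by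
        intro s
        rw [sW_succ, sW_succ, hWt s, hVt s]
      set Wt := sW f w0 η b (pad ω) t with hWtdef
      set Wt1 := sW f w0 η b (pad ω) (t+1) with hWt1def
      set Vt := sV f w0 η b (pad ω) t with hVtdef
      set g : Fin n → Vec d := fun i => gradient (f i) Wt1 - gradient (f i) Wt with hgdef
      set gbar : Vec d := gP Wt1 - gP Wt with hgbardef
      have hgbar2 : (n:ℝ) • gbar = ∑ i, g i := by
        simp only [hgbardef, hgdef, hgPdef]
        rw [← smul_sub, smul_smul, mul_inv_cancel₀ (ne_of_gt hnpos), one_smul,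
          ← Finset.sum_sub_distrib]
      set y : Fin n → Vec d := fun i => g i - gbar with hydef
      have hysum : ∑ i, y i = 0 := by
        simp only [hydef]
        rw [Finset.sum_sub_distrib, Finset.sum_const, Finset.card_univ, Fintype.card_fin,
          ← Nat.cast_smul_eq_nsmul ℝ n gbar, hgbar2, sub_self]
      have hVs1 : ∀ s : Batch n b, sV f w0 η b (pad (Function.update ω k s)) (t+1)
          = (b:ℝ)⁻¹ • ∑ i ∈ s.1, g i + Vt := by
        intro s
        rw [sV_succ]
        have hps : pad (Function.update ω k s) (t+1) = s.1 := pad_update_self ω k s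
        rw [hps, hW1 s, hWt s, hVt s]
      set u : Vec d := gP Wt - Vt with hudef
      set D : Batch n b → Vec d := fun s => (b:ℝ)⁻¹ • ∑ i ∈ s.1, y i with hDdef
      have hkey : ∀ s : Batch n b,
          gP (sW f w0 η b (pad (Function.update ω k s)) (t+1))
            - sV f w0 η b (pad (Function.update ω k s)) (t+1) = u - D s := by
        intro s
        rw [hW1 s, hVs1 s]
        simp only [hudef, hDdef]
        have h1 : ∑ i ∈ s.1, y i = ∑ i ∈ s.1, g i - (b:ℝ) • gbar := by
          simp only [hydef]
          rw [Finset.sum_sub_distrib, Finset.sum_const, s.2,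
            ← Nat.cast_smul_eq_nsmul ℝ b gbar]
        rw [h1, smul_sub, smul_smul, inv_mul_cancel₀ hb1, one_smul, hgbardef]
        abel
      have hsq : ∀ s : Batch n b, ‖gP (sW f w0 η b (pad (Function.update ω k s)) (t+1))
          - sV f w0 η b (pad (Function.update ω k s)) (t+1)‖^2
          = ‖u‖^2 - 2*⟪u, D s⟫ + ‖D s‖^2 := by
        intro s
        rw [hkey s]
        exact norm_sub_sq_real u (D s)
      rw [Finset.sum_congr rfl (fun s (_ : s ∈ univ) => hsq s)]
      rw [Finset.sum_add_distrib, Finset.sum_sub_distrib, Finset.sum_const,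
        Finset.card_univ, nsmul_eq_mul]
      have hDsum : ∑ s : Batch n b, D s = 0 := by
        simp only [hDdef]
        rw [← Finset.smul_sum]
        rw [sum_batch_eq (fun sf => ∑ i ∈ sf, y i), sum_powersetCard_sum hb y, hysum,
          smul_zero, smul_zero]
      have hmid : ∑ s : Batch n b, 2*⟪u, D s⟫ = 0 := by
        rw [← Finset.mul_sum, ← inner_sum, hDsum, inner_zero_right, mul_zero]
      rw [hmid]
      -- bound the variance term
      have hgnorm : ∀ i : Fin n, ‖g i‖^2 ≤ L^2 * η^2 * ‖Vt‖^2 := by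
        intro i
        have h3 : Wt1 - Wt = -(η • Vt) := by
          rw [hWt1def, sW_succ, ← hWtdef, ← hVtdef]
          abel
        have h1 : ‖g i‖ ≤ L * (η * ‖Vt‖) := by
          calc ‖g i‖ = ‖gradient (f i) Wt1 - gradient (f i) Wt‖ := by rw [hgdef]
            _ ≤ L * ‖Wt1 - Wt‖ := hsmooth i Wt1 Wt
            _ = L * (η * ‖Vt‖) := by
                rw [h3, norm_neg, norm_smul, Real.norm_eq_abs, abs_of_nonneg hη.le]
        calc ‖g i‖^2 ≤ (L * (η * ‖Vt‖))^2 := pow_le_pow_left₀ (norm_nonneg _) h1 2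
          _ = L^2*η^2*‖Vt‖^2 := by ring
      have hysumsq : ∑ i, ‖y i‖^2 ≤ ∑ i, ‖g i‖^2 := by
        have h1 : ∀ i : Fin n, ‖y i‖^2 = ‖g i‖^2 - 2*⟪g i, gbar⟫ + ‖gbar‖^2 := by
          intro i
          simp only [hydef]
          exact norm_sub_sq_real _ _
        have hid : ∑ i, ‖y i‖^2 = ∑ i, ‖g i‖^2 - (n:ℝ) * ‖gbar‖^2 := by
          calc ∑ i, ‖y i‖^2 = ∑ i, (‖g i‖^2 - 2*⟪g i, gbar⟫ + ‖gbar‖^2) :=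
                Finset.sum_congr rfl (fun i _ => h1 i)
            _ = ∑ i, ‖g i‖^2 - 2*⟪∑ i, g i, gbar⟫ + (n:ℝ)*‖gbar‖^2 := by
                rw [Finset.sum_add_distrib, Finset.sum_sub_distrib, ← Finset.mul_sum,
                  ← sum_inner, Finset.sum_const, Finset.card_univ, Fintype.card_fin,
                  nsmul_eq_mul]
            _ = ∑ i, ‖g i‖^2 - (n:ℝ)*‖gbar‖^2 := by
                rw [← hgbar2, real_inner_smul_left, real_inner_self_eq_norm_sq]
                ring
        have h2 : 0 ≤ (n:ℝ) * ‖gbar‖^2 := by positivity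
        linarith
      have hsumY : ∑ i, ‖y i‖^2 ≤ (n:ℝ) * (L^2*η^2*‖Vt‖^2) := by
        calc ∑ i, ‖y i‖^2 ≤ ∑ i, ‖g i‖^2 := hysumsq
          _ ≤ ∑ _i : Fin n, L^2*η^2*‖Vt‖^2 := Finset.sum_le_sum (fun i _ => hgnorm i)
          _ = (n:ℝ) * (L^2*η^2*‖Vt‖^2) := by
              rw [Finset.sum_const, Finset.card_univ, Fintype.card_fin, nsmul_eq_mul]
      have hY0 : 0 ≤ ∑ i, ‖y i‖^2 := Finset.sum_nonneg (fun i _ => by positivity)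
      have hDbound : ∑ s : Batch n b, ‖D s‖^2
          ≤ (Fintype.card (Batch n b) : ℝ) * (C * ‖Vt‖^2) := by
        have h1 : ∀ s : Batch n b, ‖D s‖^2 = ((b:ℝ)⁻¹)^2 * ‖∑ i ∈ s.1, y i‖^2 := by
          intro s
          simp only [hDdef]
          rw [norm_smul, Real.norm_eq_abs, abs_of_nonneg (by positivity), mul_pow]
        rw [Finset.sum_congr rfl (fun s (_ : s ∈ univ) => h1 s), ← Finset.mul_sum]
        rw [sum_batch_eq (fun sf => ‖∑ i ∈ sf, y i‖^2)]
        have hvar := sum_powersetCard_normSq hn hb hbn y hysum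
        have hnn1 : (0:ℝ) < (n:ℝ) * ((n:ℝ)-1) := by nlinarith
        have h3 : ∑ s ∈ (univ : Finset (Fin n)).powersetCard b, ‖∑ i ∈ s, y i‖^2
            = (n.choose b : ℝ) * b * ((n:ℝ)-b) * (∑ i, ‖y i‖^2) / ((n:ℝ)*((n:ℝ)-1)) := by
          rw [eq_div_iff (ne_of_gt hnn1)]
          linarith [hvar]
        rw [h3, hcardB, hCdef]
        have hne1 : (n:ℝ) - 1 ≠ 0 := by intro hc; nlinarith
        have hnne : (n:ℝ) ≠ 0 := ne_of_gt hnpos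
        have hfac : 0 ≤ (n.choose b:ℝ) * ((n:ℝ)-(b:ℝ)) / ((b:ℝ)*(n:ℝ)*((n:ℝ)-1)) := by
          apply div_nonneg
          · apply mul_nonneg (by positivity) (by linarith)
          · apply mul_nonneg (by positivity) (by linarith)
        calc ((b:ℝ)⁻¹)^2 * ((n.choose b:ℝ)*(b:ℝ)*((n:ℝ)-(b:ℝ))*(∑ i, ‖y i‖^2)/((n:ℝ)*((n:ℝ)-1)))
            = ((n.choose b:ℝ)*((n:ℝ)-(b:ℝ))/((b:ℝ)*(n:ℝ)*((n:ℝ)-1))) * (∑ i, ‖y i‖^2) := by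
              field_simp [hb1, hnne, hne1]
          _ ≤ ((n.choose b:ℝ)*((n:ℝ)-(b:ℝ))/((b:ℝ)*(n:ℝ)*((n:ℝ)-1)))
              * ((n:ℝ)*(L^2*η^2*‖Vt‖^2)) := mul_le_mul_of_nonneg_left hsumY hfac
          _ = (n.choose b:ℝ) * (L^2*η^2*(((n:ℝ)-(b:ℝ))/((b:ℝ)*((n:ℝ)-1))) * ‖Vt‖^2) := by
              field_simp [hb1, hnne, hne1]
      linarith [hDbound]
    -- lift the pointwise bound to the expectation
    have hup := sum_update_eq k (fun ω : Fin (m+1) → Batch n b =>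
      ‖gP (sW f w0 η b (pad ω) (t+1)) - sV f w0 η b (pad ω) (t+1)‖^2)
    have h1 : (Fintype.card (Batch n b) : ℝ) * Aq (t+1)
        = ∑ ω : Fin (m+1) → Batch n b, ∑ s : Batch n b,
          ‖gP (sW f w0 η b (pad (Function.update ω k s)) (t+1))
            - sV f w0 η b (pad (Function.update ω k s)) (t+1)‖^2 := by
      simp only [hAq]
      exact hup.symm
    have h2 : (Fintype.card (Batch n b) : ℝ) * Aq (t+1)
        ≤ (Fintype.card (Batch n b) : ℝ) * (Aq t + C * Bq t) := by
      rw [h1]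
      refine le_trans (Finset.sum_le_sum (fun ω (_ : ω ∈ univ) => hpt ω)) (le_of_eq ?_)
      have h4 : ∀ ω : Fin (m+1) → Batch n b,
          (Fintype.card (Batch n b) : ℝ) *
            (‖gP (sW f w0 η b (pad ω) t) - sV f w0 η b (pad ω) t‖^2
             + C * ‖sV f w0 η b (pad ω) t‖^2)
          = (Fintype.card (Batch n b) : ℝ) *
              ‖gP (sW f w0 η b (pad ω) t) - sV f w0 η b (pad ω) t‖^2
            + ((Fintype.card (Batch n b) : ℝ) * C) * ‖sV f w0 η b (pad ω) t‖^2 := by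
        intro ω
        ring
      rw [Finset.sum_congr rfl (fun ω (_ : ω ∈ univ) => h4 ω), Finset.sum_add_distrib,
        ← Finset.mul_sum, ← Finset.mul_sum]
      simp only [hAq, hBq]
      ring
    exact le_of_mul_le_mul_left h2 hcardBpos
  -- iterate the recursion
  have hAqle : ∀ t, t ≤ m → Aq t ≤ C * ∑ j ∈ Finset.range t, Bq j := by
    intro t
    induction t with
    | zero => intro _; rw [hAq0]; simp
    | succ t ih =>
      intro ht
      have h1 := hrec t (by omega)
      have h2 := ih (by omega)
      rw [Finset.sum_range_succ]
      have h3 : C * (∑ j ∈ Finset.range t, Bq j + Bq t)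
          = C * ∑ j ∈ Finset.range t, Bq j + C * Bq t := by ring
      rw [h3]
      linarith
  have hSA : ∑ t ∈ Finset.range (m+1), Aq t
      ≤ C * ((m:ℝ) * ∑ j ∈ Finset.range (m+1), Bq j) := by
    calc ∑ t ∈ Finset.range (m+1), Aq t
        ≤ ∑ t ∈ Finset.range (m+1), (C * ∑ j ∈ Finset.range t, Bq j) :=
          Finset.sum_le_sum (fun t ht => hAqle t (by
            have := Finset.mem_range.mp ht; omega))
      _ = C * ∑ t ∈ Finset.range (m+1), ∑ j ∈ Finset.range t, Bq j := by
          rw [Finset.mul_sum]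
      _ ≤ C * ((m:ℝ) * ∑ j ∈ Finset.range (m+1), Bq j) :=
          mul_le_mul_of_nonneg_left (sum_range_sum_range_le hBq0 m) hC0
  -- learning rate condition
  have hCm : C * (m:ℝ) ≤ 1 - L * η := by
    set K : ℝ := 4 * (m:ℝ) / (b:ℝ) * (((n:ℝ) - (b:ℝ)) / ((n:ℝ) - 1)) with hK
    have hK0 : 0 ≤ K := by
      apply mul_nonneg (by positivity)
      apply div_nonneg (by linarith) (by linarith)
    set R : ℝ := Real.sqrt (1 + K) with hR
    have hRsq : R^2 = 1 + K := Real.sq_sqrt (by linarith)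
    have hR1 : 1 ≤ R := by
      rw [hR]
      calc (1:ℝ) = Real.sqrt 1 := (Real.sqrt_one).symm
        _ ≤ Real.sqrt (1+K) := Real.sqrt_le_sqrt (by linarith)
    have hden : 0 < L * (R + 1) := mul_pos hL (by linarith)
    have h1 : η * (L * (R + 1)) ≤ 2 := by
      rw [← le_div_iff₀ hden]
      exact hη2
    have h2 : L * η * R ≤ 2 - L * η := by nlinarith [h1]
    have h3 : 0 ≤ L * η * R := by
      apply mul_nonneg (mul_nonneg hL.le hη.le) (by linarith)
    have h4 : (L*η*R)^2 ≤ (2 - L*η)^2 := by nlinarith [h2, h3]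
    have h5 : L^2*η^2*K ≤ 4 - 4*(L*η) := by nlinarith [h4, hRsq]
    have h6 : C * (m:ℝ) = L^2*η^2*K/4 := by
      rw [hCdef, hK]
      have hb0 : (b:ℝ) ≠ 0 := ne_of_gt hbpos
      have hn1 : (n:ℝ) - 1 ≠ 0 := by intro h; nlinarith
      field_simp
    rw [h6]
    linarith
  -- final combination
  have hSG : ∑ t ∈ Finset.range (m+1), Gq t ≤ NΩ * (2/η * (P w0 - P wstar)) := by
    have hSB : (0:ℝ) ≤ ∑ j ∈ Finset.range (m+1), Bq j :=
      Finset.sum_nonneg (fun j _ => hBq0 j)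
    have h1 : (C * (m:ℝ)) * ∑ j ∈ Finset.range (m+1), Bq j
        ≤ (1 - L*η) * ∑ j ∈ Finset.range (m+1), Bq j :=
      mul_le_mul_of_nonneg_right hCm hSB
    have h2 : ∑ t ∈ Finset.range (m+1), (Gq t + (1 - L*η) * Bq t - Aq t)
        = (∑ t ∈ Finset.range (m+1), Gq t)
          + (1 - L*η) * (∑ t ∈ Finset.range (m+1), Bq t)
          - ∑ t ∈ Finset.range (m+1), Aq t := by
      rw [Finset.sum_sub_distrib, Finset.sum_add_distrib, Finset.mul_sum]
    rw [h2] at hsum1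
    linarith [hSA, hsum1, h1]
  -- rewrite the goal
  unfold expec
  rw [Fintype.sum_prod_type, Fintype.card_prod, Fintype.card_fin]
  have hswap2 : ∑ ω : Fin (m+1) → Batch n b, ∑ τ : Fin (m+1),
      ‖gradient P ((sarahState f w0 η b (pad ω) (τ:ℕ)).1)‖^2
      = ∑ t ∈ Finset.range (m+1), Gq t := by
    rw [Finset.sum_comm]
    have hterm : ∀ τ : Fin (m+1), τ ∈ (univ : Finset (Fin (m+1))) →
        (∑ ω : Fin (m+1) → Batch n b,
          ‖gradient P ((sarahState f w0 η b (pad ω) (τ:ℕ)).1)‖^2) = Gq (τ:ℕ) := by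
      intro τ _
      simp only [hGq]
      refine Finset.sum_congr rfl fun ω _ => ?_
      rw [hgPeq]
      rfl
    rw [Finset.sum_congr rfl hterm, Fin.sum_univ_eq_sum_range (fun t => Gq t) (m+1)]
  rw [hswap2]
  have hmain := hSG
  have hΔ : 0 ≤ P w0 - P wstar := by linarith [hmin w0]
  have hm1 : (0:ℝ) < (m:ℝ) + 1 := by positivity
  have hcast : ((Fintype.card (Fin (m+1) → Batch n b) * (m+1) : ℕ) : ℝ)
      = NΩ * ((m:ℝ)+1) := by
    push_cast [hNΩ]
    ring
  rw [hcast]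
  have hle : (NΩ * ((m:ℝ)+1))⁻¹ * (∑ t ∈ Finset.range (m+1), Gq t)
      ≤ (NΩ * ((m:ℝ)+1))⁻¹ * (NΩ * (2/η * (P w0 - P wstar))) := by
    apply mul_le_mul_of_nonneg_left hmain
    positivity
  refine le_trans hle (le_of_eq ?_)
  have hNΩ0 : NΩ ≠ 0 := ne_of_gt hNΩpos
  have hη0 : η ≠ 0 := ne_of_gt hη
  field_simp
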